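/- Let n ≥ 1 and let E = EuclideanSpace ℝ (Fin n). The subgroup of the group of affine isometries of E generated by the coordinate-transposition maps r_{ij} (the linear isometries permuting the i-th and j-th coordinates, i ≠ j) together with the translations t_i by the standard basis vectors e_i is isomorphic to the semidirect product (Fin n → ℤ) ⋊ Equiv.Perm (Fin n): the natural homomorphism sending (λ, π) to the isometry x ↦ λ + π·x (where (π·x)(i) = x(π⁻¹(i))) is injective and its image is exactly this subgroup. In particular, every element of this subgroup can be written uniquely as t_λ r_π, a translation by an integer vector followed by a coordinate permutation. -/

import Mathlib

open Multiplicative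

/-- The automorphism of `Multiplicative (Fin n → A)` permuting coordinates by `π`. -/
def permMulAut {n : ℕ} {A : Type*} [AddCommGroup A] (π : Equiv.Perm (Fin n)) :
    MulAut (Multiplicative (Fin n → A)) where
  toFun v := ofAdd fun i => toAdd v (π⁻¹ i)
  invFun v := ofAdd fun i => toAdd v (π i)
  left_inv v := by
    refine Multiplicative.toAdd.injective (funext fun i => ?_)
    simp
  right_inv v := by
    refine Multiplicative.toAdd.injective (funext fun i => ?_)
    simp
  map_mul' a b := rfl

/-- The coordinate-permutation action of `Equiv.Perm (Fin n)` on `Multiplicative (Fin n → A)`. -/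
def permAction (n : ℕ) (A : Type*) [AddCommGroup A] :
    Equiv.Perm (Fin n) →* MulAut (Multiplicative (Fin n → A)) where
  toFun := permMulAut
  map_one' := by
    refine MulEquiv.ext fun v => ?_
    refine Multiplicative.toAdd.injective (funext fun i => ?_)
    simp [permMulAut]
  map_mul' π σ := by
    refine MulEquiv.ext fun v => ?_
    refine Multiplicative.toAdd.injective (funext fun i => ?_)
    simp [permMulAut]

/-- The middle group `Mid(B_n) = (Fin n → ℤ) ⋊ Equiv.Perm (Fin n)`. -/
abbrev Mid (n : ℕ) := Multiplicative (Fin n → ℤ) ⋊[permAction n ℤ] Equiv.Perm (Fin n)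

abbrev Euc (n : ℕ) := EuclideanSpace ℝ (Fin n)

/-- The euclidean vector with the coordinates of an integer vector. -/
noncomputable def intVec {n : ℕ} (v : Fin n → ℤ) : Euc n :=
  (WithLp.equiv 2 (Fin n → ℝ)).symm fun i => (v i : ℝ)

lemma intVec_add {n : ℕ} (v w : Fin n → ℤ) : intVec (v + w) = intVec v + intVec w := by
  ext i
  simp [intVec]

lemma intVec_zero {n : ℕ} : intVec (0 : Fin n → ℤ) = 0 := by
  ext i
  simp [intVec]

/-- Translations by integer vectors, as a homomorphism to affine isometries. -/
noncomputable def transHom (n : ℕ) : Multiplicative (Fin n → ℤ) →* (Euc n ≃ᵃⁱ[ℝ] Euc n) where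
  toFun v := AffineIsometryEquiv.constVAdd ℝ (Euc n) (intVec (toAdd v))
  map_one' := by
    show AffineIsometryEquiv.constVAdd ℝ (Euc n) (intVec 0) = 1
    rw [intVec_zero, AffineIsometryEquiv.constVAdd_zero]
    rfl
  map_mul' a b := by
    refine AffineIsometryEquiv.ext fun x => ?_
    show intVec (toAdd a + toAdd b) +ᵥ x = intVec (toAdd a) +ᵥ (intVec (toAdd b) +ᵥ x)
    rw [intVec_add, vadd_vadd]

/-- Coordinate permutations, as a homomorphism to affine isometries. -/
noncomputable def permIsoHom (n : ℕ) :
    Equiv.Perm (Fin n) →* (Euc n ≃ᵃⁱ[ℝ] Euc n) where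
  toFun π := (LinearIsometryEquiv.piLpCongrLeft 2 ℝ ℝ π).toAffineIsometryEquiv
  map_one' := by
    refine AffineIsometryEquiv.ext fun x => ?_
    rfl
  map_mul' π σ := by
    refine AffineIsometryEquiv.ext fun x => ?_
    rfl

lemma intVec_perm {n : ℕ} (g : Equiv.Perm (Fin n)) (v : Fin n → ℤ) :
    intVec (fun i => v (g⁻¹ i)) = (LinearIsometryEquiv.piLpCongrLeft 2 ℝ ℝ g) (intVec v) := by
  ext i
  simp [intVec, LinearIsometryEquiv.piLpCongrLeft_apply, Equiv.piCongrLeft']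

lemma transHom_compat (n : ℕ) (g : Equiv.Perm (Fin n)) :
    ∀ v : Multiplicative (Fin n → ℤ),
      (transHom n) (ofAdd fun i => toAdd v (g⁻¹ i)) =
        MulAut.conj ((permIsoHom n) g) ((transHom n) v) := by
  intro v
  refine AffineIsometryEquiv.ext fun x => ?_
  show intVec (fun i => toAdd v (g⁻¹ i)) +ᵥ x
      = ((permIsoHom n) g) (intVec (toAdd v) +ᵥ ((permIsoHom n) g)⁻¹ x)
  rw [AffineIsometryEquiv.map_vadd, intVec_perm]
  simp only [AffineIsometryEquiv.coe_inv, AffineIsometryEquiv.apply_symm_apply]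
  show _ +ᵥ x = ((LinearIsometryEquiv.piLpCongrLeft 2 ℝ ℝ g).toAffineIsometryEquiv.linearIsometryEquiv)
      (intVec (toAdd v)) +ᵥ x
  rw [LinearIsometryEquiv.toAffineIsometryEquiv_linearIsometryEquiv]

/-- The natural homomorphism from the middle group `Mid(B_n)` to the group of affine
isometries of `ℝⁿ`, sending `(λ, π)` to the isometry `x ↦ λ + π·x`. -/
noncomputable def midToIso (n : ℕ) : Mid n →* (Euc n ≃ᵃⁱ[ℝ] Euc n) :=
  SemidirectProduct.lift (transHom n) (permIsoHom n)
    (fun g => MonoidHom.ext fun v => transHom_compat n g v)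

lemma midToIso_apply (n : ℕ) (v : Multiplicative (Fin n → ℤ)) (π : Equiv.Perm (Fin n))
    (x : Euc n) (i : Fin n) :
    (midToIso n ⟨v, π⟩) x i = (toAdd v i : ℝ) + x (π⁻¹ i) := by
  show ((transHom n v * permIsoHom n π) x) i = _
  show (intVec (toAdd v) +ᵥ (LinearIsometryEquiv.piLpCongrLeft 2 ℝ ℝ π x)) i = _
  simp [intVec, LinearIsometryEquiv.piLpCongrLeft, Equiv.piCongrLeft', WithLp.equiv]

lemma intVec_single {n : ℕ} (i : Fin n) :
    intVec (Pi.single i (1 : ℤ)) = EuclideanSpace.single i (1 : ℝ) := by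
  ext j
  simp only [intVec, WithLp.equiv, Equiv.refl_symm, Equiv.refl_apply, Equiv.coe_fn_mk,
    EuclideanSpace.single_apply, Pi.single_apply]
  show (((if j = i then 1 else 0 : ℤ)) : ℝ) = if j = i then 1 else 0
  split <;> norm_num

lemma prod_singles {n : ℕ} (v : Multiplicative (Fin n → ℤ)) :
    v = ∏ i : Fin n, (ofAdd (Pi.single i (1:ℤ)))^(toAdd v i) := by
  apply Multiplicative.toAdd.injective
  rw [toAdd_prod]
  simp only [← ofAdd_zsmul, toAdd_ofAdd]
  funext j
  simp [Pi.single_apply, Finset.sum_ite_eq']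

theorem middle_group_realization (m : ℕ) :
    Function.Injective (midToIso (m + 1)) ∧
    (midToIso (m + 1)).range =
      Subgroup.closure
        ({f | ∃ i j : Fin (m + 1), i ≠ j ∧ f = (permIsoHom (m + 1)) (Equiv.swap i j)} ∪
         {f | ∃ i : Fin (m + 1),
            f = AffineIsometryEquiv.constVAdd ℝ (Euc (m + 1))
              (EuclideanSpace.single i (1 : ℝ))}) ∧
    ∀ (v : Fin (m + 1) → ℤ) (π : Equiv.Perm (Fin (m + 1))) (x : Euc (m + 1))
        (i : Fin (m + 1)),
      (midToIso (m + 1) ⟨ofAdd v, π⟩) x i = (v i : ℝ) + x (π⁻¹ i) := by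
  set n := m + 1
  refine ⟨?_, ?_, fun v π x i => midToIso_apply n (ofAdd v) π x i⟩
  · rw [injective_iff_map_eq_one]
    rintro ⟨v, π⟩ h
    have h0 : ∀ x : Euc n, (midToIso n ⟨v, π⟩) x = x := fun x => by rw [h]; rfl
    have hv : ∀ i, toAdd v i = 0 := by
      intro i
      have := congrArg (fun y => y i) (h0 0)
      rw [midToIso_apply] at this
      simp only [PiLp.zero_apply, add_zero] at this
      exact_mod_cast this
    have hπ : π = 1 := by
      refine Equiv.ext fun j => ?_
      show π j = j
      by_contra hne
      have := congrArg (fun y => y (π j)) (h0 (EuclideanSpace.single j 1))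
      rw [midToIso_apply, hv, show π⁻¹ (π j) = j from π.symm_apply_apply j,
        EuclideanSpace.single_apply, EuclideanSpace.single_apply,
        if_pos rfl, if_neg hne] at this
      norm_num at this
    have hv' : v = 1 := Multiplicative.toAdd.injective (funext fun i => hv i)
    rw [SemidirectProduct.ext_iff]
    exact ⟨hv', hπ⟩
  · apply le_antisymm
    · rintro f ⟨⟨v, π⟩, rfl⟩
      have hmul : (⟨v, π⟩ : Mid n) = ⟨v, 1⟩ * ⟨1, π⟩ := by
        rw [SemidirectProduct.ext_iff]
        exact ⟨by show v = v * (permAction n ℤ) 1 1; simp, by show π = 1 * π; simp⟩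
      rw [hmul, map_mul]
      refine Subgroup.mul_mem _ ?_ ?_
      · have h1 : midToIso n ⟨v, 1⟩ = transHom n v := by
          show transHom n v * permIsoHom n 1 = transHom n v
          simp
        rw [h1]
        have hgen : ∀ i : Fin n, ofAdd (Pi.single i (1:ℤ)) ∈
            Subgroup.comap (transHom n)
              (Subgroup.closure
                ({f | ∃ i j : Fin n, i ≠ j ∧ f = (permIsoHom n) (Equiv.swap i j)} ∪
                 {f | ∃ i : Fin n,
                    f = AffineIsometryEquiv.constVAdd ℝ (Euc n)
                      (EuclideanSpace.single i (1 : ℝ))})) := by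
          intro i
          refine Subgroup.subset_closure (Or.inr ⟨i, ?_⟩)
          show AffineIsometryEquiv.constVAdd ℝ (Euc n) (intVec (Pi.single i 1)) = _
          rw [intVec_single]
        have : v ∈ Subgroup.comap (transHom n)
            (Subgroup.closure
              ({f | ∃ i j : Fin n, i ≠ j ∧ f = (permIsoHom n) (Equiv.swap i j)} ∪
               {f | ∃ i : Fin n,
                  f = AffineIsometryEquiv.constVAdd ℝ (Euc n)
                    (EuclideanSpace.single i (1 : ℝ))})) := by
          rw [prod_singles v]
          exact Subgroup.prod_mem _ fun i _ => Subgroup.zpow_mem _ (hgen i) _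
        exact this
      · have h2 : midToIso n ⟨1, π⟩ = permIsoHom n π := by
          show transHom n 1 * permIsoHom n π = permIsoHom n π
          simp
        rw [h2]
        have hπ : π ∈ Subgroup.closure {σ : Equiv.Perm (Fin n) | σ.IsSwap} := by
          rw [Equiv.Perm.closure_isSwap]; trivial
        have := Subgroup.mem_map_of_mem (permIsoHom n) hπ
        rw [MonoidHom.map_closure] at this
        refine Subgroup.closure_mono ?_ this
        rintro f ⟨σ, ⟨i, j, hij, rfl⟩, rfl⟩
        exact Or.inl ⟨i, j, hij, rfl⟩
    · rw [Subgroup.closure_le]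
      rintro f (⟨i, j, hij, rfl⟩ | ⟨i, rfl⟩)
      · refine ⟨⟨1, Equiv.swap i j⟩, ?_⟩
        show transHom n 1 * permIsoHom n (Equiv.swap i j) = _
        simp
      · refine ⟨⟨ofAdd (Pi.single i 1), 1⟩, ?_⟩
        show transHom n (ofAdd (Pi.single i 1)) * permIsoHom n 1 = _
        simp only [map_one, mul_one]
        show AffineIsometryEquiv.constVAdd ℝ (Euc n) (intVec (Pi.single i 1)) = _
        rw [intVec_single]
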